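/- Decentralized message passing correctness on a tree: in a finite tree graph of agents where M_{ij}^{t+1} = R̂_i + ∑_{k∈N(i)\{j}} (M_{ki}^t − R_0) with M_{ij}^0 = R̂_i, the message M_{ij}^t equals ∑_{v ∈ B_t(i,j)} R̂_v − (|B_t(i,j)| − 1)·R_0, where B_t(i,j) is the set of vertices reachable from i within t edges without passing through j. -/

import Mathlib

open Finset BigOperators

section Aux
open SimpleGraph

open scoped Classical

variable {V : Type*} [Fintype V] [DecidableEq V] {G : SimpleGraph V}

def Bset (G : SimpleGraph V) (t : ℕ) (i j : V) : Set V :=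
  {v : V | ∃ p : G.Walk v i, p.IsPath ∧ p.length ≤ t ∧ s(i, j) ∉ p.edges}

lemma path_unique (hT : G.IsTree) {u v : V} (p q : G.Walk u v)
    (hp : p.IsPath) (hq : q.IsPath) : p = q :=
  ((hT.existsUnique_path u v).unique hp hq)

/-- if `q` is a path from `v` to `k` not using edge `(k,i)`, with `k~i`,
then `i` is not on `q` and `q.concat` is a path. -/
lemma concat_lemma (hT : G.IsTree) {v k i : V} (h : G.Adj k i)
    (q : G.Walk v k) (hq : q.IsPath) (he : s(k, i) ∉ q.edges) :
    i ∉ q.support ∧ (q.concat h).IsPath := by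
  have hi : i ∉ q.support := by
    intro hi
    have hd : (q.dropUntil i hi).IsPath := hq.dropUntil hi
    have hcp : (Walk.cons h.symm Walk.nil : G.Walk i k).IsPath := by
      simp [Walk.cons_isPath_iff, h.ne']
    have := path_unique hT (q.dropUntil i hi) (Walk.cons h.symm Walk.nil) hd hcp
    have hmem : s(i, k) ∈ (q.dropUntil i hi).edges := by
      rw [this]; simp
    have := q.edges_dropUntil_subset hi hmem
    rw [Sym2.eq_swap] at this
    exact he this
  refine ⟨hi, ?_⟩
  rw [← Walk.isPath_reverse_iff, Walk.reverse_concat]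
  rw [Walk.cons_isPath_iff]
  refine ⟨hq.reverse, ?_⟩
  simpa using hi

set_option linter.unusedSectionVars false

lemma mem_B_concat (hT : G.IsTree) {v k i : V} (h : G.Adj k i) {t : ℕ}
    (hv : v ∈ Bset G t k i) : ∃ p : G.Walk v i, p.IsPath ∧ p.length ≤ t + 1 ∧
      p = (Classical.choose hv).concat h ∧ i ∉ (Classical.choose hv).support := by
  obtain ⟨hq, hlen, he⟩ := Classical.choose_spec hv
  set q := Classical.choose hv
  obtain ⟨hi, hp⟩ := concat_lemma hT h q hq he
  exact ⟨q.concat h, hp, by simp [Walk.length_concat]; omega, rfl, hi⟩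

lemma B_zero (i j : V) : Bset G 0 i j = {i} := by
  ext v
  simp only [Bset, Set.mem_setOf_eq, Set.mem_singleton_iff]
  constructor
  · rintro ⟨p, _, hlen, _⟩
    exact Walk.eq_of_length_eq_zero (Nat.le_zero.1 hlen)
  · rintro rfl
    exact ⟨Walk.nil, Walk.IsPath.nil, by simp, by simp⟩

lemma not_mem_B_self (hT : G.IsTree) {k i : V} (h : G.Adj k i) (t : ℕ) :
    i ∉ Bset G t k i := by
  rintro ⟨q, hq, -, he⟩
  have hcp : (Walk.cons h.symm Walk.nil : G.Walk i k).IsPath := by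
    simp [Walk.cons_isPath_iff, h.ne']
  have := path_unique hT q (Walk.cons h.symm Walk.nil) hq hcp
  apply he
  rw [this, Sym2.eq_swap]; simp

lemma B_disjoint (hT : G.IsTree) {k k' i : V} (h : G.Adj k i) (h' : G.Adj k' i)
    (hne : k ≠ k') (t : ℕ) : Disjoint (Bset G t k i) (Bset G t k' i) := by
  rw [Set.disjoint_left]
  intro v hv hv'
  obtain ⟨p, hp, -, hpe, hi⟩ := mem_B_concat hT h hv
  obtain ⟨p', hp', -, hpe', hi'⟩ := mem_B_concat hT h' hv'
  have hpp : p = p' := path_unique hT p p' hp hp'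
  have hmem : s(k, i) ∈ p'.edges := by
    rw [← hpp, hpe, Walk.edges_concat]; simp
  rw [hpe', Walk.edges_concat] at hmem
  rcases (by simpa [List.concat_eq_append, Sym2.eq_iff] using hmem :
      s(k, i) ∈ (Classical.choose hv').edges ∨ k = k' ∨ k = i ∧ i = k') with hm | hm | ⟨hm, -⟩
  · exact hi' (Walk.snd_mem_support_of_mem_edges _ hm)
  · exact hne hm
  · exact G.loopless.irrefl i (hm ▸ h)

lemma B_succ (hT : G.IsTree) {i j : V} (hij : G.Adj i j) (t : ℕ) {v : V} :
    v ∈ Bset G (t + 1) i j ↔ v = i ∨ ∃ k, G.Adj i k ∧ k ≠ j ∧ v ∈ Bset G t k i := by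
  constructor
  · rintro ⟨p, hp, hlen, he⟩
    by_cases hvi : v = i
    · exact Or.inl hvi
    refine Or.inr ?_
    obtain ⟨k, h, q, hq⟩ := Walk.exists_eq_cons_of_ne (Ne.symm hvi) p.reverse
    -- h : G.Adj i k, q : G.Walk k v, p.reverse = cons h q
    have hqpath : q.IsPath ∧ i ∉ q.support := by
      have := hp.reverse
      rw [hq, Walk.cons_isPath_iff] at this
      exact this
    refine ⟨k, h, ?_, q.reverse, hqpath.1.reverse, ?_, ?_⟩
    · rintro rfl
      apply he
      have : s(i, k) ∈ p.reverse.edges := by rw [hq]; simp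
      simpa using this
    · have : p.reverse.length = q.length + 1 := by rw [hq]; simp
      rw [Walk.length_reverse] at this
      rw [Walk.length_reverse]; omega
    · intro hmem
      rw [Walk.edges_reverse, List.mem_reverse] at hmem
      exact hqpath.2 (Walk.snd_mem_support_of_mem_edges _ hmem)
  · rintro (rfl | ⟨k, h, hkj, hv⟩)
    · exact ⟨Walk.nil, Walk.IsPath.nil, by simp, by simp⟩
    obtain ⟨p, hp, hlen, hpe, hi⟩ := mem_B_concat hT h.symm hv
    refine ⟨p, hp, hlen, ?_⟩
    intro hmem
    rw [hpe, Walk.edges_concat] at hmem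
    rcases (by simpa [List.concat_eq_append, Sym2.eq_iff] using hmem :
        s(i, j) ∈ (Classical.choose hv).edges ∨ i = k ∧ j = i ∨ j = k) with hm | ⟨-, hm⟩ | hm
    · exact hi (Walk.fst_mem_support_of_mem_edges _ hm)
    · exact G.loopless.irrefl i (hm ▸ hij)
    · exact hkj hm.symm

theorem aux_main {V : Type*} [Fintype V] [DecidableEq V]
    (G : SimpleGraph V) [DecidableRel G.Adj] (hT : G.IsTree)
    {A : Type*} [AddCommGroup A]
    (Rh : V → A) (R0 : A) (M : ℕ → V → V → A)
    (h0 : ∀ i j, M 0 i j = Rh i)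
    (hrec : ∀ t i j, M (t + 1) i j =
      Rh i + ∑ k ∈ (G.neighborFinset i).erase j, (M t k i - R0)) :
    ∀ (t : ℕ) (i j : V), G.Adj i j →
      M t i j = (∑ᶠ v ∈ Bset G t i j, Rh v) -
        (((Bset G t i j).ncard : ℤ) - 1) • R0 := by
  have hconv : ∀ (t : ℕ) (k i : V), (∑ᶠ v ∈ Bset G t k i, Rh v) =
      ∑ v ∈ (Set.toFinite (Bset G t k i)).toFinset, Rh v := by
    intro t k i
    rw [← (Set.toFinite (Bset G t k i)).coe_toFinset, finsum_mem_coe_finset]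
    simp
  intro t
  induction t with
  | zero =>
    intro i j hij
    rw [h0, B_zero, finsum_mem_singleton]
    simp
  | succ t ih =>
    intro i j hij
    set N' := (G.neighborFinset i).erase j with hN'
    set F : V → Finset V := fun k => (Set.toFinite (Bset G t k i)).toFinset with hF
    have hNadj : ∀ k ∈ N', G.Adj k i ∧ k ≠ j := by
      intro k hk
      rcases Finset.mem_erase.1 hk with ⟨h1, h2⟩
      exact ⟨((G.mem_neighborFinset i k).1 h2).symm, h1⟩
    have hpart : (Set.toFinite (Bset G (t+1) i j)).toFinset = insert i (N'.biUnion F) := by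
      ext v
      simp only [Set.Finite.mem_toFinset, Finset.mem_insert, Finset.mem_biUnion,
        Finset.mem_erase, G.mem_neighborFinset, hF, hN']
      rw [B_succ hT hij]
      constructor
      · rintro (rfl | ⟨k, h1, h2, h3⟩)
        · exact Or.inl rfl
        · exact Or.inr ⟨k, ⟨h2, h1⟩, by simpa using h3⟩
      · rintro (rfl | ⟨k, ⟨h2, h1⟩, h3⟩)
        · exact Or.inl rfl
        · exact Or.inr ⟨k, h1, h2, by simpa using h3⟩
    have hnotmem : i ∉ N'.biUnion F := by
      rw [Finset.mem_biUnion]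
      rintro ⟨k, hk, hm⟩
      exact not_mem_B_self hT (hNadj k hk).1 t ((Set.Finite.mem_toFinset _).1 hm)
    have hdisj : (↑N' : Set V).PairwiseDisjoint F := by
      intro k hk k' hk' hne
      simp only [Function.onFun, hF, Finset.disjoint_left, Set.Finite.mem_toFinset]
      have := B_disjoint hT (hNadj k (by exact_mod_cast hk)).1
        (hNadj k' (by exact_mod_cast hk')).1 hne t
      exact fun a ha ha' => Set.disjoint_left.1 this ha ha'
    have hsum : (∑ᶠ v ∈ Bset G (t+1) i j, Rh v) =
        Rh i + ∑ k ∈ N', ∑ v ∈ F k, Rh v := by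
      rw [hconv, hpart, Finset.sum_insert hnotmem, Finset.sum_biUnion hdisj]
    have hcard : ((Bset G (t+1) i j).ncard : ℤ) =
        1 + ∑ k ∈ N', ((Bset G t k i).ncard : ℤ) := by
      rw [Set.ncard_eq_toFinset_card _ (Set.toFinite _), hpart,
        Finset.card_insert_of_notMem hnotmem, Finset.card_biUnion hdisj]
      push_cast
      rw [add_comm]
      congr 1
      refine Finset.sum_congr rfl fun k _ => ?_
      rw [Set.ncard_eq_toFinset_card _ (Set.toFinite _)]
    rw [hrec, hsum, hcard]
    rw [Finset.sum_congr rfl fun k hk => by rw [ih k i (hNadj k hk).1]]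
    have hstep : ∀ k ∈ N', (∑ᶠ v ∈ Bset G t k i, Rh v) -
        (((Bset G t k i).ncard : ℤ) - 1) • R0 - R0 =
        (∑ v ∈ F k, Rh v) - ((Bset G t k i).ncard : ℤ) • R0 := by
      intro k _
      rw [hconv, sub_smul, one_smul]
      abel
    rw [Finset.sum_congr rfl hstep, Finset.sum_sub_distrib, ← Finset.sum_smul]
    have : (1 + ∑ k ∈ N', ((Bset G t k i).ncard : ℤ) - 1) =
        ∑ k ∈ N', ((Bset G t k i).ncard : ℤ) := by ring
    rw [this]
    abel

end Aux

/-- Decentralized message-passing correctness on a tree: in a finite tree of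
agents where messages obey `M_{ij}^0 = R̂_i` and
`M_{ij}^{t+1} = R̂_i + ∑_{k ∈ N(i)\{j}} (M_{ki}^t − R_0)`, the message
`M_{ij}^t` (for `j` a neighbor of `i`) equals
`∑_{v ∈ B_t(i,j)} R̂_v − (|B_t(i,j)| − 1)·R_0`, where `B_t(i,j)` is the set of
vertices whose unique path to `i` has length at most `t` and does not use the
edge `(i,j)`. -/
theorem tree_message_passing {V : Type*} [Fintype V] [DecidableEq V]
    (G : SimpleGraph V) [DecidableRel G.Adj] (hT : G.IsTree)
    {A : Type*} [AddCommGroup A]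
    (Rh : V → A) (R0 : A) (M : ℕ → V → V → A)
    (h0 : ∀ i j, M 0 i j = Rh i)
    (hrec : ∀ t i j, M (t + 1) i j =
      Rh i + ∑ k ∈ (G.neighborFinset i).erase j, (M t k i - R0)) :
    ∀ (t : ℕ) (i j : V), G.Adj i j →
      M t i j =
        (∑ᶠ v ∈ {v : V | ∃ p : G.Walk v i, p.IsPath ∧ p.length ≤ t ∧
            s(i, j) ∉ p.edges}, Rh v) -
          ((({v : V | ∃ p : G.Walk v i, p.IsPath ∧ p.length ≤ t ∧
            s(i, j) ∉ p.edges}).ncard : ℤ) - 1) • R0 := by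
  intro t i j hij
  exact aux_main G hT Rh R0 M h0 hrec t i j hij
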